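/- Let a1, a4 be real with a1 ≠ 0, a4 ≠ 0, a1 ≠ a4, and a1 ≠ 2*a4. On the open region U = {(x,y) in R^2 : 1 + a1*x > 0}, the function F(x,y) = (1/2)*(1+a1*x)^(-2*a4/a1) * [ y^2 + (1+a1-a4)*(1+2*a4*x)/(a4*(a1-a4)*(a1-2*a4)) - x^2/(a1-a4) ] is a first integral of the reversible system Q3^R given by dx/dt = y*(1+a1*x), dy/dt = -x + x^2 + a4*y^2; that is, y*(1+a1*x)*∂F/∂x(x,y) + (-x + x^2 + a4*y^2)*∂F/∂y(x,y) = 0 for all (x,y) in U. -/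

import Mathlib

/-- On U = {1 + a1*x > 0}, the function F is a first integral of the
reversible system Q3^R: dx/dt = y*(1+a1*x), dy/dt = -x + x^2 + a4*y^2. -/
theorem stmt_2 (a1 a4 : ℝ) (h1 : a1 ≠ 0) (h2 : a4 ≠ 0)
    (h3 : a1 ≠ a4) (h4 : a1 ≠ 2*a4)
    (F : ℝ → ℝ → ℝ)
    (hF : ∀ x y : ℝ, F x y = (1/2) * (1 + a1*x) ^ (-(2*a4)/a1) *
      (y^2 + (1 + a1 - a4)*(1 + 2*a4*x)/(a4*(a1 - a4)*(a1 - 2*a4))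
        - x^2/(a1 - a4))) :
    ∀ x y : ℝ, 1 + a1*x > 0 →
      y*(1 + a1*x) * deriv (fun x' => F x' y) x
        + (-x + x^2 + a4*y^2) * deriv (fun y' => F x y') y = 0 := by
  intro x y hx
  set p : ℝ := -(2*a4)/a1 with hp
  set K : ℝ := a4*(a1 - a4)*(a1 - 2*a4) with hK
  have hne : (1 : ℝ) + a1*x ≠ 0 := ne_of_gt hx
  -- derivative in y
  have hd2 : HasDerivAt (fun y' => F x y')
      ((1/2) * (1 + a1*x) ^ p * (2*y)) y := by
    have : HasDerivAt (fun y' : ℝ => (1/2) * (1 + a1*x) ^ p *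
        (y'^2 + (1 + a1 - a4)*(1 + 2*a4*x)/K - x^2/(a1 - a4)))
        ((1/2) * (1 + a1*x) ^ p * (2*y)) y := by
      have h : HasDerivAt (fun y' : ℝ => y'^2 + (1 + a1 - a4)*(1 + 2*a4*x)/K
          - x^2/(a1 - a4)) (2*y) y := by
        have := ((hasDerivAt_pow 2 y).add_const
          ((1 + a1 - a4)*(1 + 2*a4*x)/K)).sub_const (x^2/(a1 - a4))
        simpa using this
      exact h.const_mul _
    simpa only [hF] using this
  -- derivative in x
  have hu : HasDerivAt (fun x' : ℝ => 1 + a1*x') a1 x := by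
    simpa using ((hasDerivAt_id x).const_mul a1).const_add 1
  have hr : HasDerivAt (fun x' : ℝ => (1 + a1*x') ^ p)
      (p * (1 + a1*x) ^ (p - 1) * a1) x := by
    have := hu.rpow_const (p := p) (Or.inl hne)
    simpa [mul_comm, mul_left_comm, mul_assoc] using this
  have hg : HasDerivAt (fun x' : ℝ => y^2 + (1 + a1 - a4)*(1 + 2*a4*x')/K
      - x'^2/(a1 - a4)) ((1 + a1 - a4)*(2*a4)/K - 2*x/(a1 - a4)) x := by
    have h1' : HasDerivAt (fun x' : ℝ => (1 + a1 - a4)*(1 + 2*a4*x'))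
        ((1 + a1 - a4)*(2*a4)) x := by
      have : HasDerivAt (fun x' : ℝ => 1 + 2*a4*x') (2*a4) x := by
        simpa using ((hasDerivAt_id x).const_mul (2*a4)).const_add 1
      exact this.const_mul _
    have h2' : HasDerivAt (fun x' : ℝ => x'^2) (2*x) x := by
      simpa using hasDerivAt_pow 2 x
    simpa using ((h1'.div_const K).const_add (y^2)).fun_sub (h2'.div_const (a1 - a4))
  have hd1 : HasDerivAt (fun x' => F x' y)
      ((1/2) * (p * (1 + a1*x) ^ (p - 1) * a1) *
        (y^2 + (1 + a1 - a4)*(1 + 2*a4*x)/K - x^2/(a1 - a4))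
      + (1/2) * (1 + a1*x) ^ p *
        ((1 + a1 - a4)*(2*a4)/K - 2*x/(a1 - a4))) x := by
    have := (hr.const_mul (1/2 : ℝ)).fun_mul hg
    simpa only [hF, mul_comm] using this
  rw [hd1.deriv, hd2.deriv]
  -- rewrite (1+a1x)^p in terms of (1+a1x)^(p-1)
  have hsplit : (1 + a1*x) ^ p = (1 + a1*x) ^ (p - 1) * (1 + a1*x) := by
    rw [Real.rpow_sub hx, Real.rpow_one, div_mul_cancel₀ _ hne]
  have hpa : p * a1 = -(2*a4) := div_mul_cancel₀ _ h1
  rw [hsplit]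
  have ha : a1 - a4 ≠ 0 := sub_ne_zero.mpr h3
  have hb : a1 - 2*a4 ≠ 0 := sub_ne_zero.mpr h4
  have hKne : K ≠ 0 := by
    rw [hK]; exact mul_ne_zero (mul_ne_zero h2 ha) hb
  -- factor and finish with field_simp/ring using hpa
  have key : ∀ t : ℝ,
      y*(1 + a1*x) * ((1/2) * (p * t * a1) *
        (y^2 + (1 + a1 - a4)*(1 + 2*a4*x)/K - x^2/(a1 - a4))
      + (1/2) * (t * (1 + a1*x)) *
        ((1 + a1 - a4)*(2*a4)/K - 2*x/(a1 - a4)))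
      + (-x + x^2 + a4*y^2) * ((1/2) * (t * (1 + a1*x)) * (2*y)) = 0 := by
    intro t
    have hpt : p * t * a1 = -(2*a4) * t := by
      rw [mul_right_comm, hpa]
    rw [hpt, hK]
    field_simp
    ring
  exact key ((1 + a1*x) ^ (p - 1))
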